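/- Let ε : A → 𝕜 be a 𝕜-algebra homomorphism with ε(∂ x_j) = 0 for all j, and let d_1,…,d_ℓ ∈ 𝕜 be invertible elements. Define the 𝕜-algebra homomorphism ε' : A → 𝕜 on generators by ε'(x_j) = d_{r(j)} · d_{c(j)}^{−1} · ε(x_j). Then ε'(∂ x_j) = 0 for all j; that is, ε' is again an augmentation. (This is Lemma 2.3 of the paper, rescaling an augmentation of a Legendrian link by units attached to the link components, stated abstractly using the composability property of the words appearing in the differential of a dga with link grading.) -/

import Mathlib

/-- Lemma 2.3 of the paper. Let `A` be the free algebra on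
generators `x_1, …, x_n` over a field `𝕜`, with a link grading
`r, c : {1,…,n} → {1,…,ℓ}`, and let `∂ : A → A` be a `𝕜`-linear map such that each
`∂ x_j` lies in the span of the words composable from `r j` to `c j`.
If `ε` is an algebra map with `ε (∂ x_j) = 0` for all `j`, and `d_1, …, d_ℓ` are
units of `𝕜`, then the algebra map `ε'` defined on generators by
`ε' x_j = d_{r j} d_{c j}⁻¹ ε x_j` also satisfies `ε' (∂ x_j) = 0` for all `j`. -/
theorem rescaled_augmentation
    {𝕜 : Type*} [Field 𝕜] {n ℓ : ℕ} (hℓ : 1 ≤ ℓ)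
    (r c : Fin n → Fin ℓ)
    (D : FreeAlgebra 𝕜 (Fin n) →ₗ[𝕜] FreeAlgebra 𝕜 (Fin n))
    (hD : ∀ j : Fin n, D (FreeAlgebra.ι 𝕜 j) ∈ Submodule.span 𝕜
      { x : FreeAlgebra 𝕜 (Fin n) | ∃ w : List (Fin n),
          x = (w.map (FreeAlgebra.ι 𝕜)).prod ∧
          w.Chain' (fun s t => c s = r t) ∧
          ((w = [] ∧ r j = c j) ∨
            (∃ hw : w ≠ [], r (w.head hw) = r j ∧ c (w.getLast hw) = c j)) })
    (ε ε' : FreeAlgebra 𝕜 (Fin n) →ₐ[𝕜] 𝕜)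
    (hε : ∀ j : Fin n, ε (D (FreeAlgebra.ι 𝕜 j)) = 0)
    (d : Fin ℓ → 𝕜ˣ)
    (hε' : ∀ j : Fin n, ε' (FreeAlgebra.ι 𝕜 j)
        = (d (r j) : 𝕜) * ((d (c j))⁻¹ : 𝕜ˣ) * ε (FreeAlgebra.ι 𝕜 j)) :
    ∀ j : Fin n, ε' (D (FreeAlgebra.ι 𝕜 j)) = 0 := by
  -- key telescoping lemma on nonempty composable words
  have key : ∀ w : List (Fin n), ∀ hw : w ≠ [],
      w.Chain' (fun s t => c s = r t) →
      ε' (w.map (FreeAlgebra.ι 𝕜)).prod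
        = (d (r (w.head hw)) : 𝕜) * ((d (c (w.getLast hw)))⁻¹ : 𝕜ˣ)
            * ε (w.map (FreeAlgebra.ι 𝕜)).prod := by
    intro w
    induction w with
    | nil => intro hw; exact absurd rfl hw
    | cons a t ih =>
      intro hw hch
      cases t with
      | nil =>
        simp [hε' a]
      | cons b t' =>
        have hch' : (b :: t').Chain' (fun s t => c s = r t) := hch.tail
        have hcab : c a = r b := (List.isChain_cons_cons.mp hch).1
        have ht : (b :: t') ≠ [] := by simp
        have := ih ht hch'
        have hlast : (a :: b :: t').getLast hw = (b :: t').getLast ht := by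
          simp [List.getLast_cons]
        rw [hlast]
        simp only [List.map_cons, List.prod_cons, map_mul] at this ⊢
        rw [this, hε' a, hcab]
        have hu : ((d (r b))⁻¹ : 𝕜ˣ) * (d (r b) : 𝕜) = 1 := Units.inv_mul _
        have hhead : (b :: t').head ht = b := rfl
        rw [hhead]
        field_simp
        simp only [List.head_cons]
        linear_combination (d (r a) : 𝕜) * ε (FreeAlgebra.ι 𝕜 a) * ε (FreeAlgebra.ι 𝕜 b) * ε (List.map (FreeAlgebra.ι 𝕜) t').prod * hu
  intro j
  have hspan := hD j
  have hagree : ε' (D (FreeAlgebra.ι 𝕜 j))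
      = (d (r j) : 𝕜) * ((d (c j))⁻¹ : 𝕜ˣ) * ε (D (FreeAlgebra.ι 𝕜 j)) := by
    generalize D (FreeAlgebra.ι 𝕜 j) = y at hspan ⊢
    induction hspan using Submodule.span_induction with
    | mem x hx =>
      obtain ⟨w, rfl, hch, hcase⟩ := hx
      rcases hcase with ⟨rfl, hrc⟩ | ⟨hw, hr, hc⟩
      · simp [hrc, Units.mul_inv]
      · rw [key w hw hch, hr, hc]
    | zero => simp
    | add x y _ _ hx hy => simp only [map_add, hx, hy]; ring
    | smul a x _ hx => simp only [map_smul, hx, smul_eq_mul]; ring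
  rw [hagree, hε j, mul_zero]
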